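/- Assume the hypotheses identifying E[Y¹|S=1] with γ_{1,1} (consistency, trial exchangeability and positivity for a=1) and the hypotheses identifying E[Y²|S=1] with γ_{0,2} (consistency for a=2, mean transportability for a=2, external positivity of S=0, external exchangeability and positivity for a=2). Then E[Y¹ − Y² | S=1] = ψ := γ_{1,1} − γ_{0,2} = Σ_x (E[Y|X=x,S=1,A=1] − E[Y|X=x,S=0,A=2]) · P(X=x | S=1). -/
import Mathlib

open Finset
open scoped Classical

noncomputable def pr {Ω : Type*} [Fintype Ω] (P : Ω → ℝ) (E : Ω → Prop) : ℝ :=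
  ∑ ω, if E ω then P ω else 0

noncomputable def cexp {Ω : Type*} [Fintype Ω] (P : Ω → ℝ) (Y : Ω → ℝ) (E : Ω → Prop) : ℝ :=
  (∑ ω, if E ω then Y ω * P ω else 0) / pr P E

noncomputable def cpr {Ω : Type*} [Fintype Ω] (P : Ω → ℝ) (E F : Ω → Prop) : ℝ :=
  pr P (fun ω => E ω ∧ F ω) / pr P F

section helpers
variable {Ω : Type*} [Fintype Ω]

lemma pr_nonneg (P : Ω → ℝ) (hP : ∀ ω, 0 ≤ P ω) (E : Ω → Prop) : 0 ≤ pr P E :=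
  Finset.sum_nonneg fun ω _ => by split <;> simp [hP ω]

lemma pr_congr (P : Ω → ℝ) {E F : Ω → Prop} (h : ∀ ω, E ω ↔ F ω) : pr P E = pr P F :=
  Finset.sum_congr rfl fun ω _ => if_congr (h ω) rfl rfl

lemma cexp_congr_fun (P : Ω → ℝ) {Y Z : Ω → ℝ} {E : Ω → Prop}
    (h : ∀ ω, E ω → Y ω = Z ω) : cexp P Y E = cexp P Z E := by
  unfold cexp
  congr 1
  refine Finset.sum_congr rfl fun ω _ => ?_
  by_cases hE : E ω
  · simp [hE, h ω hE]
  · simp [hE]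

lemma pr_pos_of_cpr_pos (P : Ω → ℝ) (hP : ∀ ω, 0 ≤ P ω) {E F : Ω → Prop}
    (h : 0 < cpr P E F) : 0 < pr P (fun ω => E ω ∧ F ω) := by
  rcases lt_or_eq_of_le (pr_nonneg P hP (fun ω => E ω ∧ F ω)) with h' | h'
  · exact h'
  · exfalso; unfold cpr at h; rw [← h'] at h; simp at h

lemma pr_zero_imp (P : Ω → ℝ) (hP : ∀ ω, 0 ≤ P ω) {E : Ω → Prop}
    (h : pr P E = 0) : ∀ ω, E ω → P ω = 0 := by
  intro ω hω
  have := (Finset.sum_eq_zero_iff_of_nonneg (fun ω _ => by split <;> simp [hP ω])).mp h ω (Finset.mem_univ ω)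
  simpa [hω] using this

lemma cexp_sub (P : Ω → ℝ) (Y1 Y2 : Ω → ℝ) (E : Ω → Prop) :
    cexp P (fun ω => Y1 ω - Y2 ω) E = cexp P Y1 E - cexp P Y2 E := by
  unfold cexp
  rw [← sub_div, ← Finset.sum_sub_distrib]
  congr 1
  refine Finset.sum_congr rfl fun ω _ => ?_
  split <;> ring

lemma cexp_total {𝓧 : Type*} [Fintype 𝓧] (P : Ω → ℝ) (hP : ∀ ω, 0 ≤ P ω)
    (X : Ω → 𝓧) (S1 : Ω → Prop) (Z : Ω → ℝ) :
    cexp P Z S1 = ∑ x ∈ univ.filter (fun x => 0 < pr P (fun ω => X ω = x ∧ S1 ω)),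
      cexp P Z (fun ω => X ω = x ∧ S1 ω) * (pr P (fun ω => X ω = x ∧ S1 ω) / pr P S1) := by
  set N : 𝓧 → ℝ := fun x => ∑ ω, if X ω = x ∧ S1 ω then Z ω * P ω else 0 with hN
  have hdecomp : ∑ x, N x = ∑ ω, if S1 ω then Z ω * P ω else 0 := by
    rw [Finset.sum_comm]
    refine Finset.sum_congr rfl fun ω _ => ?_
    by_cases hS : S1 ω <;> simp [hS, N]
  have hfilter' : ∑ x, N x = ∑ x ∈ univ.filter (fun x => 0 < pr P (fun ω => X ω = x ∧ S1 ω)), N x := by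
    rw [Finset.sum_filter]
    refine Finset.sum_congr rfl fun x _ => ?_
    by_cases hx : 0 < pr P (fun ω => X ω = x ∧ S1 ω)
    · simp [hx]
    · have hzero : pr P (fun ω => X ω = x ∧ S1 ω) = 0 :=
        le_antisymm (not_lt.mp hx) (pr_nonneg P hP _)
      have : N x = 0 := by
        refine Finset.sum_eq_zero fun ω _ => ?_
        by_cases hE : X ω = x ∧ S1 ω
        · simp [hE, pr_zero_imp P hP hzero ω hE]
        · simp [hE]
      simp [hx, this]
  calc cexp P Z S1 = (∑ x, N x) / pr P S1 := by rw [hdecomp]; rfl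
    _ = ∑ x ∈ univ.filter (fun x => 0 < pr P (fun ω => X ω = x ∧ S1 ω)), N x / pr P S1 := by
        rw [hfilter', Finset.sum_div]
    _ = _ := by
        refine Finset.sum_congr rfl fun x hx => ?_
        have hx' := (Finset.mem_filter.mp hx).2
        unfold cexp
        rw [div_mul_div_comm]
        beta_reduce
        rw [mul_comm (pr P fun ω => X ω = x ∧ S1 ω) (pr P S1),
          mul_div_mul_right _ _ (ne_of_gt hx')]
        congr 1
        exact Finset.sum_congr rfl fun ω _ => by congr

end helpers

theorem stmt6    {Ω 𝓧 : Type*} [Fintype Ω] [Fintype 𝓧]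
    (P : Ω → ℝ) (hP : ∀ ω, 0 ≤ P ω) (hPsum : ∑ ω, P ω = 1)
    (X : Ω → 𝓧) (S : Ω → ℕ) (A : Ω → ℕ) (Y : Ω → ℝ)
    (Y1 Y2 : Ω → ℝ)
    (hS1 : 0 < pr P (fun ω => S ω = 1))
    (hcons1 : ∀ ω, A ω = 1 → Y1 ω = Y ω)
    (hexch1 : ∀ x, 0 < pr P (fun ω => X ω = x ∧ S ω = 1) → cexp P Y1 (fun ω => X ω = x ∧ S ω = 1) = cexp P Y1 (fun ω => X ω = x ∧ S ω = 1 ∧ A ω = 1))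
    (hpos1 : ∀ x, 0 < pr P (fun ω => X ω = x ∧ S ω = 1) → 0 < cpr P (fun ω => A ω = 1) (fun ω => X ω = x ∧ S ω = 1))
    (hcons2 : ∀ ω, A ω = 2 → Y2 ω = Y ω)
    (htrans : ∀ x, 0 < pr P (fun ω => X ω = x ∧ S ω = 1) → 0 < pr P (fun ω => X ω = x ∧ S ω = 0) → cexp P Y2 (fun ω => X ω = x ∧ S ω = 1) = cexp P Y2 (fun ω => X ω = x ∧ S ω = 0))
    (hextpos : ∀ x, 0 < pr P (fun ω => X ω = x ∧ S ω = 1) → 0 < cpr P (fun ω => S ω = 0) (fun ω => X ω = x))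
    (hexchext : ∀ x, 0 < pr P (fun ω => X ω = x ∧ S ω = 0) → cexp P Y2 (fun ω => X ω = x ∧ S ω = 0) = cexp P Y2 (fun ω => X ω = x ∧ S ω = 0 ∧ A ω = 2))
    (hposext : ∀ x, 0 < pr P (fun ω => X ω = x ∧ S ω = 0) → 0 < cpr P (fun ω => A ω = 2) (fun ω => X ω = x ∧ S ω = 0))
    : cexp P (fun ω => Y1 ω - Y2 ω) (fun ω => S ω = 1) =
      ∑ x ∈ univ.filter (fun x => 0 < pr P (fun ω => X ω = x ∧ S ω = 1)),
        (cexp P Y (fun ω => X ω = x ∧ S ω = 1 ∧ A ω = 1) - cexp P Y (fun ω => X ω = x ∧ S ω = 0 ∧ A ω = 2)) *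
        (pr P (fun ω => X ω = x ∧ S ω = 1) / pr P (fun ω => S ω = 1)) := by
  rw [cexp_sub, cexp_total P hP X (fun ω => S ω = 1) Y1,
    cexp_total P hP X (fun ω => S ω = 1) Y2, ← Finset.sum_sub_distrib]
  refine Finset.sum_congr rfl fun x hx => ?_
  have hx' := (Finset.mem_filter.mp hx).2
  rw [← sub_mul]
  congr 1
  -- external positivity: P(X=x, S=0) > 0
  have h0 : 0 < pr P (fun ω => X ω = x ∧ S ω = 0) := by
    have := pr_pos_of_cpr_pos P hP (hextpos x hx')
    calc (0:ℝ) < pr P (fun ω => S ω = 0 ∧ X ω = x) := this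
      _ = pr P (fun ω => X ω = x ∧ S ω = 0) := pr_congr P fun ω => and_comm
  have e1 : cexp P Y1 (fun ω => X ω = x ∧ S ω = 1) = cexp P Y (fun ω => X ω = x ∧ S ω = 1 ∧ A ω = 1) := by
    rw [hexch1 x hx']
    exact cexp_congr_fun P fun ω hω => hcons1 ω hω.2.2
  have e2 : cexp P Y2 (fun ω => X ω = x ∧ S ω = 1) = cexp P Y (fun ω => X ω = x ∧ S ω = 0 ∧ A ω = 2) := by
    rw [htrans x hx' h0, hexchext x h0]
    exact cexp_congr_fun P fun ω hω => hcons2 ω hω.2.2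
  rw [e1, e2]
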